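/- Let E be a symmetric space on [0,1] and M(E) its multiplicator with respect to tensor product. Then for every t ∈ (0,1], the fundamental function of M(E) satisfies φ_{M(E)}(t) = ‖σ_t‖_{E→E}, where φ_{M(E)}(t) = ‖χ_{(0,t)}‖_{M(E)} and σ_t is the dilation operator. -/

import Mathlib

open MeasureTheory Set Filter ENNReal

/-- Lebesgue measure restricted to `[0,1]`. -/
noncomputable def muI : Measure ℝ := volume.restrict (Set.Icc (0:ℝ) 1)

/-- Lebesgue measure on the square `[0,1]²`. -/
noncomputable def muI2 : Measure (ℝ × ℝ) := muI.prod muI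

/-- Distribution function `n_f(τ) = μ{w : |f w| > τ}`. -/
noncomputable def distrib {α : Type*} [MeasurableSpace α] (μ : Measure α) (f : α → ℝ)
    (τ : ℝ) : ℝ≥0∞ :=
  μ {w | τ < |f w|}

/-- Non-increasing rearrangement of `f` with respect to `μ`. -/
noncomputable def rearr {α : Type*} [MeasurableSpace α] (μ : Measure α) (f : α → ℝ)
    (t : ℝ) : ℝ :=
  sInf {τ : ℝ | 0 ≤ τ ∧ distrib μ f τ ≤ ENNReal.ofReal t}

/-- Tensor product `(x ⊗ y)(s,t) = x s * y t`. -/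
def tensor (x y : ℝ → ℝ) : ℝ × ℝ → ℝ := fun p => x p.1 * y p.2

/-- Dilation operator `σ_t x (u) = x(u/t) χ_{[0,1]}(u/t)`. -/
noncomputable def dil (t : ℝ) (x : ℝ → ℝ) : ℝ → ℝ :=
  fun u => x (u / t) * (Set.Icc (0:ℝ) 1).indicator (fun _ => (1:ℝ)) (u / t)

/-- A symmetric (rearrangement invariant) Banach function space on `[0,1]`. -/
structure SymmetricSpace where
  Mem : (ℝ → ℝ) → Prop
  N : (ℝ → ℝ) → ℝ
  N_nonneg : ∀ f, 0 ≤ N f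
  add_mem : ∀ f g, Mem f → Mem g → Mem (f + g)
  smul_mem : ∀ (c : ℝ) (f), Mem f → Mem (c • f)
  N_add_le : ∀ f g, Mem f → Mem g → N (f + g) ≤ N f + N g
  N_smul : ∀ (c : ℝ) (f), N (c • f) = |c| * N f
  mono_mem : ∀ f g, Mem g → (∀ᵐ u ∂muI, |f u| ≤ |g u|) → Mem f
  mono_norm : ∀ f g, Mem g → (∀ᵐ u ∂muI, |f u| ≤ |g u|) → N f ≤ N g
  symm_mem : ∀ f g, Mem g → (∀ τ : ℝ, 0 < τ → distrib muI f τ = distrib muI g τ) → Mem f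
  symm_norm : ∀ f g, Mem g → (∀ τ : ℝ, 0 < τ → distrib muI f τ = distrib muI g τ) → N f = N g
  const_mem : Mem (fun _ => (1:ℝ))

/-- Membership in `E(I×I)`: the rearrangement of `z` belongs to `E`. -/
def Mem2 (E : SymmetricSpace) (z : ℝ × ℝ → ℝ) : Prop := E.Mem (rearr muI2 z)

/-- Norm in `E(I×I)`. -/
noncomputable def N2 (E : SymmetricSpace) (z : ℝ × ℝ → ℝ) : ℝ := E.N (rearr muI2 z)

/-- Membership in the multiplicator space `M(E)`. -/
def MMem (E : SymmetricSpace) (x : ℝ → ℝ) : Prop := ∀ y, E.Mem y → Mem2 E (tensor x y)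

/-- Norm in the multiplicator space `M(E)`. -/
noncomputable def MN (E : SymmetricSpace) (x : ℝ → ℝ) : ℝ :=
  sSup {r : ℝ | ∃ y, E.Mem y ∧ E.N y ≤ 1 ∧ r = N2 E (tensor x y)}

/-- Operator norm of the dilation `σ_t : E → E`. -/
noncomputable def opN (E : SymmetricSpace) (t : ℝ) : ℝ :=
  sSup {r : ℝ | ∃ y, E.Mem y ∧ E.N y ≤ 1 ∧ r = E.N (dil t y)}

/-- Operator norm of the dilation `σ_t : M(E) → M(E)`. -/
noncomputable def MopN (E : SymmetricSpace) (t : ℝ) : ℝ :=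
  sSup {r : ℝ | ∃ x, MMem E x ∧ MN E x ≤ 1 ∧ r = MN E (dil t x)}

/-! ### Auxiliary lemmas -/

section Aux

lemma muI_apply (s : Set ℝ) : muI s = volume (s ∩ Icc (0:ℝ) 1) :=
  Measure.restrict_apply' measurableSet_Icc

lemma muI_univ : muI univ = 1 := by
  simp [muI_apply, Real.volume_Icc]

lemma muI_le_one (s : Set ℝ) : muI s ≤ 1 := by
  rw [← muI_univ]; exact measure_mono (subset_univ s)

lemma muI_ne_top (s : Set ℝ) : muI s ≠ ∞ :=
  ne_top_of_le_ne_top one_ne_top (muI_le_one s)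

instance : IsFiniteMeasure muI := ⟨by rw [muI_univ]; exact one_lt_top⟩

lemma muI2_le_one (s : Set (ℝ × ℝ)) : muI2 s ≤ 1 := by
  have : muI2 univ = 1 := by
    rw [muI2, ← univ_prod_univ, Measure.prod_prod, muI_univ, one_mul]
  rw [← this]; exact measure_mono (subset_univ s)

lemma distrib_muI_le_one (f : ℝ → ℝ) (τ : ℝ) : distrib muI f τ ≤ 1 := muI_le_one _

lemma distrib_muI2_le_one (f : ℝ × ℝ → ℝ) (τ : ℝ) : distrib muI2 f τ ≤ 1 := muI2_le_one _

lemma distrib_anti {α : Type*} [MeasurableSpace α] (μ : Measure α) (f : α → ℝ) :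
    Antitone (distrib μ f) := fun τ₁ τ₂ h =>
  measure_mono fun u hu => lt_of_le_of_lt h hu

lemma rearr_nonneg {α : Type*} [MeasurableSpace α] (μ : Measure α) (f : α → ℝ) (u : ℝ) :
    0 ≤ rearr μ f u :=
  Real.sInf_nonneg fun _ hx => hx.1

/-- Right continuity of the distribution function. -/
lemma distrib_right_cts {α : Type*} [MeasurableSpace α] (μ : Measure α) (z : α → ℝ) (σ : ℝ) :
    distrib μ z σ = ⨆ k : ℕ, distrib μ z (σ + 1/(k+1)) := by
  have hmono : Monotone (fun k : ℕ => {w | σ + 1/((k:ℝ)+1) < |z w|}) := by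
    intro k l hkl u hu
    have h1 : 1/((l:ℝ)+1) ≤ 1/((k:ℝ)+1) := by
      apply one_div_le_one_div_of_le
      · positivity
      · exact_mod_cast by omega
    simp only [mem_setOf_eq] at hu ⊢
    linarith
  have hset : {w | σ < |z w|} = ⋃ k : ℕ, {w | σ + 1/((k:ℝ)+1) < |z w|} := by
    ext w
    simp only [mem_setOf_eq, mem_iUnion]
    constructor
    · intro h
      obtain ⟨k, hk⟩ := exists_nat_one_div_lt (sub_pos.2 h)
      exact ⟨k, by linarith⟩
    · rintro ⟨k, hk⟩
      have : (0:ℝ) < 1/((k:ℝ)+1) := by positivity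
      linarith
  rw [distrib, hset, hmono.measure_iUnion]
  rfl

/-- The fundamental "ray" lemma: the distribution function of the rearrangement. -/
lemma distrib_rearr {α : Type*} [MeasurableSpace α] (μ : Measure α) (z : α → ℝ)
    (hm : ∀ σ : ℝ, distrib μ z σ ≤ 1) (τ : ℝ) (hτ : 0 ≤ τ) :
    distrib muI (rearr μ z) τ = distrib μ z τ - ⨅ k : ℕ, distrib μ z (k : ℝ) := by
  set m : ℝ → ℝ≥0∞ := fun σ => distrib μ z σ with hm_def
  have hanti : Antitone m := distrib_anti μ z
  set d : ℝ≥0∞ := ⨅ k : ℕ, m (k : ℝ) with hd_def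
  set c : ℝ≥0∞ := m τ with hc_def
  have hc1 : c ≤ 1 := hm τ
  have hd_le_c : d ≤ c := le_trans (iInf_le _ ⌈τ⌉₊) (hanti (Nat.le_ceil τ))
  have hd1 : d ≤ 1 := le_trans hd_le_c hc1
  have hc_ne : c ≠ ∞ := ne_top_of_le_ne_top one_ne_top hc1
  have hd_ne : d ≠ ∞ := ne_top_of_le_ne_top one_ne_top hd1
  set S : ℝ → Set ℝ := fun u => {σ : ℝ | 0 ≤ σ ∧ m σ ≤ ENNReal.ofReal u} with hS_def
  have hrearr : ∀ u, rearr μ z u = sInf (S u) := fun u => rfl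
  have hbdd : ∀ u, BddBelow (S u) := fun u => ⟨0, fun x hx => hx.1⟩
  have hinf_mem : ∀ u : ℝ, (S u).Nonempty → m (sInf (S u)) ≤ ENNReal.ofReal u := by
    intro u hne
    show distrib μ z (sInf (S u)) ≤ ENNReal.ofReal u
    rw [distrib_right_cts μ z (sInf (S u))]
    refine iSup_le fun k => ?_
    have hlt : sInf (S u) < sInf (S u) + 1/((k:ℝ)+1) := by
      have : (0:ℝ) < 1/((k:ℝ)+1) := by positivity
      linarith
    obtain ⟨σ, hσS, hσlt⟩ := exists_lt_of_csInf_lt hne hlt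
    exact le_trans (hanti hσlt.le) hσS.2
  have upper : {u : ℝ | τ < |rearr μ z u|} ⊆ {u : ℝ | d ≤ ENNReal.ofReal u ∧ ENNReal.ofReal u < c} := by
    intro u hu
    rw [mem_setOf_eq, abs_of_nonneg (rearr_nonneg μ z u)] at hu
    have hne : (S u).Nonempty := by
      by_contra h
      rw [not_nonempty_iff_eq_empty] at h
      have : rearr μ z u = 0 := by rw [hrearr, h, Real.sInf_empty]
      rw [this] at hu; linarith
    constructor
    · obtain ⟨σ, hσ⟩ := hne
      exact le_trans (le_trans (iInf_le _ ⌈σ⌉₊) (hanti (Nat.le_ceil σ))) hσ.2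
    · by_contra h
      push_neg at h
      have hτS : τ ∈ S u := ⟨hτ, h⟩
      have := csInf_le (hbdd u) hτS
      rw [hrearr] at hu
      linarith
  have lower : {u : ℝ | d < ENNReal.ofReal u ∧ ENNReal.ofReal u < c} ⊆ {u : ℝ | τ < |rearr μ z u|} := by
    rintro u ⟨h1, h2⟩
    have hne : (S u).Nonempty := by
      obtain ⟨k, hk⟩ := iInf_lt_iff.1 h1
      exact ⟨(k : ℝ), ⟨Nat.cast_nonneg k, hk.le⟩⟩
    have hmr := hinf_mem u hne
    rw [mem_setOf_eq, abs_of_nonneg (rearr_nonneg μ z u), hrearr]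
    by_contra h
    push_neg at h
    exact absurd (le_trans (hanti h) hmr) (not_le.2 h2)
  have hmuUpper : muI {u : ℝ | d ≤ ENNReal.ofReal u ∧ ENNReal.ofReal u < c} = c - d := by
    have hset : {u : ℝ | d ≤ ENNReal.ofReal u ∧ ENNReal.ofReal u < c} ∩ Icc (0:ℝ) 1
        = Ico d.toReal c.toReal := by
      ext u
      constructor
      · rintro ⟨⟨h1, h2⟩, hu0, _⟩
        exact ⟨(ENNReal.le_ofReal_iff_toReal_le hd_ne hu0).1 h1,
          (ENNReal.ofReal_lt_iff_lt_toReal hu0 hc_ne).1 h2⟩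
      · rintro ⟨h1, h2⟩
        have hu0 : 0 ≤ u := le_trans ENNReal.toReal_nonneg h1
        have hc1' : c.toReal ≤ 1 := by
          calc c.toReal ≤ (1:ℝ≥0∞).toReal := ENNReal.toReal_mono one_ne_top hc1
          _ = 1 := by simp
        exact ⟨⟨(ENNReal.le_ofReal_iff_toReal_le hd_ne hu0).2 h1,
          (ENNReal.ofReal_lt_iff_lt_toReal hu0 hc_ne).2 h2⟩, hu0, le_trans h2.le hc1'⟩
    rw [muI_apply, hset, Real.volume_Ico, ENNReal.ofReal_sub _ ENNReal.toReal_nonneg,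
      ENNReal.ofReal_toReal hc_ne, ENNReal.ofReal_toReal hd_ne]
  have hmuLower : muI {u : ℝ | d < ENNReal.ofReal u ∧ ENNReal.ofReal u < c} = c - d := by
    have hset : {u : ℝ | d < ENNReal.ofReal u ∧ ENNReal.ofReal u < c} ∩ Icc (0:ℝ) 1
        = Ioo d.toReal c.toReal := by
      ext u
      constructor
      · rintro ⟨⟨h1, h2⟩, hu0, _⟩
        exact ⟨(ENNReal.lt_ofReal_iff_toReal_lt hd_ne).1 h1,
          (ENNReal.ofReal_lt_iff_lt_toReal hu0 hc_ne).1 h2⟩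
      · rintro ⟨h1, h2⟩
        have hu0 : 0 ≤ u := le_trans ENNReal.toReal_nonneg h1.le
        have hc1' : c.toReal ≤ 1 := by
          calc c.toReal ≤ (1:ℝ≥0∞).toReal := ENNReal.toReal_mono one_ne_top hc1
          _ = 1 := by simp
        exact ⟨⟨(ENNReal.lt_ofReal_iff_toReal_lt hd_ne).2 h1,
          (ENNReal.ofReal_lt_iff_lt_toReal hu0 hc_ne).2 h2⟩, hu0, le_trans h2.le hc1'⟩
    rw [muI_apply, hset, Real.volume_Ioo, ENNReal.ofReal_sub _ ENNReal.toReal_nonneg,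
      ENNReal.ofReal_toReal hc_ne, ENNReal.ofReal_toReal hd_ne]
  refine le_antisymm ?_ ?_
  · rw [← hmuUpper]; exact measure_mono upper
  · rw [← hmuLower]; exact measure_mono lower

end Aux
section Hull

/-- Measurable hull of the level set. -/
noncomputable def Hull (y : ℝ → ℝ) (τ : ℝ) : Set ℝ := toMeasurable muI {u | τ < |y u|}

/-- Intersection of all hulls: the "essentially infinite" part. -/
noncomputable def Hinf (y : ℝ → ℝ) : Set ℝ := ⋂ k : ℕ, Hull y (k : ℝ)

lemma Hull_measurable (y : ℝ → ℝ) (τ : ℝ) : MeasurableSet (Hull y τ) :=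
  measurableSet_toMeasurable _ _

lemma Hinf_measurable (y : ℝ → ℝ) : MeasurableSet (Hinf y) :=
  MeasurableSet.iInter fun k => Hull_measurable y k

lemma subset_Hull (y : ℝ → ℝ) (τ : ℝ) : {u | τ < |y u|} ⊆ Hull y τ :=
  subset_toMeasurable _ _

lemma muI_Hull (y : ℝ → ℝ) (τ : ℝ) : muI (Hull y τ) = distrib muI y τ :=
  measure_toMeasurable _

/-- hulls are a.e. nested. -/
lemma Hull_diff_null (y : ℝ → ℝ) {σ τ : ℝ} (h : τ ≤ σ) : muI (Hull y σ \ Hull y τ) = 0 := by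
  have hsub : {u | σ < |y u|} ⊆ Hull y σ ∩ Hull y τ :=
    subset_inter (subset_Hull y σ)
      (le_trans (fun u hu => lt_of_le_of_lt h hu) (subset_Hull y τ))
  have h1 : muI (Hull y σ) ≤ muI (Hull y σ ∩ Hull y τ) := by
    rw [muI_Hull]; exact measure_mono hsub
  have h2 := measure_inter_add_diff (μ := muI) (Hull y σ) (Hull_measurable y τ)
  have h3 : muI (Hull y σ ∩ Hull y τ) + muI (Hull y σ \ Hull y τ)
      ≤ muI (Hull y σ ∩ Hull y τ) + 0 := by
    rw [h2, add_zero]; exact h1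
  have := ENNReal.le_of_add_le_add_left (muI_ne_top _) h3
  exact le_antisymm this zero_le

lemma Hinf_diff_null (y : ℝ → ℝ) (τ : ℝ) : muI (Hinf y \ Hull y τ) = 0 := by
  have hk : τ ≤ (⌈τ⌉₊ : ℝ) := Nat.le_ceil τ
  refine le_antisymm ?_ zero_le
  calc muI (Hinf y \ Hull y τ) ≤ muI (Hull y (⌈τ⌉₊ : ℝ) \ Hull y τ) := by
        apply measure_mono
        apply diff_subset_diff_left
        exact iInter_subset _ ⌈τ⌉₊
    _ = 0 := Hull_diff_null y hk

lemma muI_Hinf (y : ℝ → ℝ) : muI (Hinf y) = ⨅ k : ℕ, distrib muI y (k : ℝ) := by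
  set Nk : ℕ → Set ℝ := fun k => ⋂ (j : ℕ) (_ : j ≤ k), Hull y (j : ℝ) with hNk
  have hmeas : ∀ k, MeasurableSet (Nk k) := fun k =>
    MeasurableSet.iInter fun j => MeasurableSet.iInter fun _ => Hull_measurable y j
  have hanti : Antitone Nk := by
    intro k l hkl
    exact fun u hu => mem_iInter₂.2 fun j hj => mem_iInter₂.1 hu j (le_trans hj hkl)
  have hNkval : ∀ k, muI (Nk k) = distrib muI y (k : ℝ) := by
    intro k
    refine le_antisymm ?_ ?_
    · calc muI (Nk k) ≤ muI (Hull y (k : ℝ)) :=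
            measure_mono (le_trans (iInter_subset _ k) (iInter_subset _ le_rfl))
        _ = _ := muI_Hull y k
    · refine measure_mono (subset_iInter₂ fun j hj => ?_)
      refine le_trans (fun u hu => ?_) (subset_Hull y (j : ℝ))
      have : (j : ℝ) ≤ (k : ℝ) := by exact_mod_cast hj
      exact lt_of_le_of_lt this hu
  have hint : Hinf y = ⋂ k, Nk k := by
    apply Subset.antisymm
    · intro u hu
      exact mem_iInter.2 fun k => mem_iInter₂.2 fun j _ => mem_iInter.1 hu j
    · intro u hu
      exact mem_iInter.2 fun k => mem_iInter₂.1 (mem_iInter.1 hu k) k le_rfl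
  rw [hint, Directed.measure_iInter (fun k => (hmeas k).nullMeasurableSet)
    (hanti.directed_ge) ⟨0, muI_ne_top _⟩]
  exact iInf_congr hNkval

lemma muI_Hull_inter_Hinf (y : ℝ → ℝ) (τ : ℝ) :
    muI (Hull y τ ∩ Hinf y) = muI (Hinf y) := by
  have h2 := measure_inter_add_diff (μ := muI) (Hinf y) (Hull_measurable y τ)
  rw [Hinf_diff_null y τ, add_zero] at h2
  rw [inter_comm]; exact h2

end Hull

section Masked

/-- Distribution of a function masked by the indicator of a set. -/
lemma distrib_mask (y : ℝ → ℝ) (W : Set ℝ) (τ : ℝ) (hτ : 0 ≤ τ) :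
    distrib muI (fun u => y u * W.indicator (fun _ => (1:ℝ)) u) τ
      = muI ({u | τ < |y u|} ∩ W) := by
  rw [distrib]
  congr 1
  ext u
  by_cases hu : u ∈ W
  · simp [hu, mem_setOf_eq]
  · simp [hu, mem_setOf_eq, not_lt.2 hτ]

/-- Distribution of the part of `y` away from `Hinf`. -/
lemma distrib_g (y : ℝ → ℝ) (τ : ℝ) (hτ : 0 ≤ τ) :
    distrib muI (fun u => y u * ((Hinf y)ᶜ).indicator (fun _ => (1:ℝ)) u) τ
      = distrib muI y τ - muI (Hinf y) := by
  rw [distrib_mask y _ τ hτ,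
    ← Measure.measure_toMeasurable_inter (μ := muI) (Hinf_measurable y).compl (muI_ne_top _)]
  have h2 := measure_inter_add_diff (μ := muI) (Hull y τ) (Hinf_measurable y)
  rw [muI_Hull_inter_Hinf y τ, add_comm] at h2
  have h3 : muI (Hull y τ \ Hinf y) + muI (Hinf y) = distrib muI y τ := by
    rw [h2, muI_Hull]
  exact ENNReal.eq_sub_of_add_eq (muI_ne_top _) h3

/-- Distribution of the part of `y` on `Hinf`. -/
lemma distrib_p1 (y : ℝ → ℝ) (τ : ℝ) (hτ : 0 ≤ τ) :
    distrib muI (fun u => y u * (Hinf y).indicator (fun _ => (1:ℝ)) u) τ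
      = muI (Hinf y) := by
  rw [distrib_mask y _ τ hτ,
    ← Measure.measure_toMeasurable_inter (μ := muI) (Hinf_measurable y) (muI_ne_top _)]
  exact muI_Hull_inter_Hinf y τ

/-- Distribution of the part of `y` on a measurable subset `W` of `Hinf`. -/
lemma distrib_slice (y : ℝ → ℝ) (W : Set ℝ) (hW : MeasurableSet W) (τ : ℝ) (hτ : 0 ≤ τ) :
    distrib muI (fun u => y u * (Hinf y ∩ W).indicator (fun _ => (1:ℝ)) u) τ
      = muI (Hinf y ∩ W) := by
  rw [distrib_mask y _ τ hτ,
    ← Measure.measure_toMeasurable_inter (μ := muI) ((Hinf_measurable y).inter hW) (muI_ne_top _)]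
  have h2 := measure_inter_add_diff (μ := muI) (Hinf y ∩ W) (Hull_measurable y τ)
  have h0 : muI ((Hinf y ∩ W) \ Hull y τ) = 0 := by
    refine le_antisymm ?_ zero_le
    calc muI ((Hinf y ∩ W) \ Hull y τ) ≤ muI (Hinf y \ Hull y τ) :=
          measure_mono (diff_subset_diff_left inter_subset_left)
      _ = 0 := Hinf_diff_null y τ
  rw [h0, add_zero] at h2
  rw [inter_comm]; exact h2

end Masked
section Distrib

variable {t : ℝ}

/-- Distribution of the tensor with the indicator. -/
lemma distrib_tensor (ht : 0 < t) (ht1 : t ≤ 1) (y : ℝ → ℝ) (τ : ℝ) (hτ : 0 ≤ τ) :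
    distrib muI2 (tensor ((Ioc (0:ℝ) t).indicator fun _ => (1:ℝ)) y) τ
      = ENNReal.ofReal t * distrib muI y τ := by
  have hset : {w : ℝ × ℝ | τ < |tensor ((Ioc (0:ℝ) t).indicator fun _ => (1:ℝ)) y w|}
      = (Ioc (0:ℝ) t) ×ˢ {u | τ < |y u|} := by
    ext ⟨a, b⟩
    by_cases ha : a ∈ Ioc (0:ℝ) t
    · simp [tensor, ha, mem_setOf_eq, Set.prod]
    · simp [tensor, ha, mem_setOf_eq, Set.prod, not_lt.2 hτ]
  rw [distrib, hset, muI2, Measure.prod_prod]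
  congr 1
  have hsub : Ioc (0:ℝ) t ⊆ Icc (0:ℝ) 1 := fun u hu =>
    mem_Icc.mpr ⟨(mem_Ioc.mp hu).1.le, (mem_Ioc.mp hu).2.trans ht1⟩
  rw [muI_apply, inter_eq_left.2 hsub, Real.volume_Ioc, sub_zero]

/-- Distribution of the dilated function. -/
lemma distrib_dil (ht : 0 < t) (ht1 : t ≤ 1) (w : ℝ → ℝ) (τ : ℝ) (hτ : 0 ≤ τ) :
    distrib muI (dil t w) τ = ENNReal.ofReal t * distrib muI w τ := by
  set B : Set ℝ := {v | τ < |w v|} ∩ Icc (0:ℝ) 1 with hB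
  have hset : {u : ℝ | τ < |dil t w u|} = (· * t⁻¹) ⁻¹' B := by
    ext u
    have hdiv : u * t⁻¹ = u / t := (div_eq_mul_inv u t).symm
    simp only [dil, mem_setOf_eq, mem_preimage, hdiv]
    by_cases h : u / t ∈ Icc (0:ℝ) 1
    · simp [hB, indicator_of_mem h, h, mem_inter_iff, mem_setOf_eq]
    · simp [hB, indicator_of_notMem h, h, not_lt.2 hτ]
  have hsub : (· * t⁻¹) ⁻¹' B ⊆ Icc (0:ℝ) 1 := by
    intro u hu
    have hmem : u * t⁻¹ ∈ {v : ℝ | τ < |w v|} ∩ Icc (0:ℝ) 1 := hu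
    obtain ⟨-, h0, h1⟩ := hmem
    have hu' : u = u * t⁻¹ * t := by field_simp
    constructor
    · rw [hu']; exact mul_nonneg h0 ht.le
    · rw [hu']
      calc u * t⁻¹ * t ≤ 1 * t := by
            apply mul_le_mul_of_nonneg_right h1 ht.le
        _ ≤ 1 := by linarith
  rw [distrib, hset, muI_apply, inter_eq_left.2 hsub,
    Real.volume_preimage_mul_right (inv_ne_zero ht.ne')]
  rw [inv_inv, abs_of_pos ht]
  congr 1
  rw [hB, distrib, muI_apply]

/-- Existence of a proportional slice of `Hinf`. -/
lemma exists_slice (ht : 0 < t) (ht1 : t ≤ 1) (y : ℝ → ℝ) :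
    ∃ s : ℝ, muI (Hinf y ∩ Icc 0 s) = ENNReal.ofReal t * muI (Hinf y) := by
  set A := Hinf y
  set φ : ℝ → ℝ := fun s => (muI (A ∩ Icc 0 s)).toReal with hφ
  have hmono : Monotone φ := by
    intro s1 s2 h
    exact ENNReal.toReal_mono (muI_ne_top _)
      (measure_mono (inter_subset_inter_right _ (Icc_subset_Icc le_rfl h)))
  have hlip : ∀ s1 s2 : ℝ, s1 ≤ s2 → φ s2 ≤ φ s1 + (s2 - s1) := by
    intro s1 s2 h
    have hsub : A ∩ Icc 0 s2 ⊆ (A ∩ Icc 0 s1) ∪ Ioc s1 s2 := by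
      rintro u ⟨hA, h0, h2⟩
      rcases le_or_gt u s1 with h' | h'
      · exact Or.inl ⟨hA, h0, h'⟩
      · exact Or.inr ⟨h', h2⟩
    have hm : muI (A ∩ Icc 0 s2) ≤ muI (A ∩ Icc 0 s1) + ENNReal.ofReal (s2 - s1) := by
      calc muI (A ∩ Icc 0 s2) ≤ muI ((A ∩ Icc 0 s1) ∪ Ioc s1 s2) := measure_mono hsub
        _ ≤ muI (A ∩ Icc 0 s1) + muI (Ioc s1 s2) := measure_union_le _ _
        _ ≤ muI (A ∩ Icc 0 s1) + ENNReal.ofReal (s2 - s1) := by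
            apply add_le_add le_rfl
            rw [muI_apply]
            calc volume (Ioc s1 s2 ∩ Icc 0 1) ≤ volume (Ioc s1 s2) :=
                  measure_mono inter_subset_left
              _ = ENNReal.ofReal (s2 - s1) := Real.volume_Ioc
    calc φ s2 ≤ (muI (A ∩ Icc 0 s1) + ENNReal.ofReal (s2 - s1)).toReal :=
          ENNReal.toReal_mono (by
            exact ENNReal.add_ne_top.2 ⟨muI_ne_top _, ENNReal.ofReal_ne_top⟩) hm
      _ = φ s1 + (s2 - s1) := by
          rw [ENNReal.toReal_add (muI_ne_top _) ENNReal.ofReal_ne_top,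
            ENNReal.toReal_ofReal (by linarith)]
  have hcont : Continuous φ := by
    have : LipschitzWith 1 φ := by
      apply LipschitzWith.of_dist_le_mul
      intro a b
      rw [Real.dist_eq, Real.dist_eq]
      simp only [NNReal.coe_one, one_mul]
      rw [abs_le]
      rcases le_total a b with h | h
      · have h1 := hlip a b h
        have h2 := hmono h
        have h3 : |a - b| = b - a := by rw [abs_sub_comm, abs_of_nonneg (by linarith)]
        rw [h3]; constructor <;> linarith
      · have h1 := hlip b a h
        have h2 := hmono h
        have h3 : |a - b| = a - b := abs_of_nonneg (by linarith)
        rw [h3]; constructor <;> linarith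
    exact this.continuous
  have h0 : φ 0 = 0 := by
    have hz : muI (A ∩ Icc (0:ℝ) 0) = 0 := by
      refine le_antisymm ?_ zero_le
      rw [muI_apply]
      calc volume (A ∩ Icc (0:ℝ) 0 ∩ Icc 0 1) ≤ volume {(0:ℝ)} := by
            apply measure_mono
            intro u hu
            have := hu.1.2
            simp only [Icc_self, mem_singleton_iff] at this ⊢
            exact this
        _ = 0 := Real.volume_singleton
    rw [hφ]; simp only [hz, ENNReal.toReal_zero]
  have h1 : φ 1 = (muI A).toReal := by
    have : muI (A ∩ Icc (0:ℝ) 1) = muI A := by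
      rw [muI_apply, muI_apply, inter_assoc, inter_self]
    rw [hφ]; simp only [this]
  have hres : t * (muI A).toReal ∈ Icc (φ 0) (φ 1) := by
    rw [h0, h1]
    constructor
    · positivity
    · exact mul_le_of_le_one_left ENNReal.toReal_nonneg ht1
  obtain ⟨s, -, hs⟩ := intermediate_value_Icc (by norm_num : (0:ℝ) ≤ 1) hcont.continuousOn hres
  refine ⟨s, ?_⟩
  have : muI (A ∩ Icc 0 s) = ENNReal.ofReal (t * (muI A).toReal) := by
    rw [← hs]
    exact (ENNReal.ofReal_toReal (muI_ne_top _)).symm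
  rw [this, ENNReal.ofReal_mul ht.le, ENNReal.ofReal_toReal (muI_ne_top _)]

end Distrib

section NormZero

/-- The scaling trick: a member with a constant distribution function has norm zero. -/
lemma flat_norm_zero (E : SymmetricSpace) (Q : ℝ → ℝ) (hQ : E.Mem Q) (C : ℝ≥0∞)
    (h : ∀ τ : ℝ, 0 < τ → distrib muI Q τ = C) : E.N Q = 0 := by
  have h2 : ∀ τ : ℝ, 0 < τ → distrib muI ((2:ℝ) • Q) τ = distrib muI Q τ := by
    intro τ hτ
    have hset : {u : ℝ | τ < |((2:ℝ) • Q) u|} = {u : ℝ | τ/2 < |Q u|} := by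
      ext u
      simp only [Pi.smul_apply, smul_eq_mul, mem_setOf_eq, abs_mul, abs_two]
      constructor <;> intro <;> linarith
    rw [distrib, hset, ← distrib, h _ (by linarith), h _ hτ]
  have heq := E.symm_norm ((2:ℝ) • Q) Q hQ h2
  rw [E.N_smul, abs_two] at heq
  have h0 := E.N_nonneg Q
  linarith

/-- The infimum of `n k - L` where `L = ⨅ n k` is zero. -/
lemma iInf_sub_iInf_eq_zero (n : ℕ → ℝ≥0∞) (hle : ∀ k, n k ≤ 1) :
    ⨅ k : ℕ, (n k - ⨅ j : ℕ, n j) = 0 := by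
  set L := ⨅ j : ℕ, n j with hL
  have hLne : L ≠ ∞ := ne_top_of_le_ne_top one_ne_top (le_trans (iInf_le _ 0) (hle 0))
  refine le_antisymm ?_ zero_le
  refine ENNReal.le_of_forall_pos_le_add fun ε hε _ => ?_
  have hlt : L < L + ε := ENNReal.lt_add_right hLne (by exact_mod_cast hε.ne')
  obtain ⟨k, hk⟩ := iInf_lt_iff.1 hlt
  calc ⨅ k : ℕ, (n k - L) ≤ n k - L := iInf_le _ k
    _ ≤ ε := by
        rw [tsub_le_iff_right, add_comm]
        exact hk.le
    _ = 0 + ε := (zero_add _).symm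

end NormZero
section RearrDil

lemma rearr_dil_le {t : ℝ} (ht : 0 < t) (ht1 : t ≤ 1) (g : ℝ → ℝ)
    (hg0 : (⨅ k : ℕ, distrib muI g (k:ℝ)) = 0) (u : ℝ) :
    rearr muI (dil t g) u ≤ rearr muI g u := by
  have htne : ENNReal.ofReal t ≠ 0 := by
    simp only [ne_eq, ENNReal.ofReal_eq_zero, not_le]; exact ht
  have htle1 : ENNReal.ofReal t ≤ 1 := by
    rw [← ENNReal.ofReal_one]; exact ENNReal.ofReal_le_ofReal ht1
  have hset : {σ : ℝ | 0 ≤ σ ∧ distrib muI (dil t g) σ ≤ ENNReal.ofReal u}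
      = {σ : ℝ | 0 ≤ σ ∧ ENNReal.ofReal t * distrib muI g σ ≤ ENNReal.ofReal u} := by
    ext σ
    exact and_congr_right fun h0 => by rw [distrib_dil ht ht1 g σ h0]
  show sInf {σ : ℝ | 0 ≤ σ ∧ distrib muI (dil t g) σ ≤ ENNReal.ofReal u}
      ≤ sInf {σ : ℝ | 0 ≤ σ ∧ distrib muI g σ ≤ ENNReal.ofReal u}
  rw [hset]
  rcases le_or_gt u 0 with hu | hu
  · have hzero : ENNReal.ofReal u = 0 := ENNReal.ofReal_eq_zero.2 hu
    rw [hzero]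
    apply le_of_eq
    congr 1
    ext σ
    refine and_congr_right fun h0 => ?_
    rw [nonpos_iff_eq_zero, nonpos_iff_eq_zero, mul_eq_zero, or_iff_right htne]
  · apply csInf_le_csInf ⟨0, fun x hx => hx.1⟩
    · have hpos : (0:ℝ≥0∞) < ENNReal.ofReal u := ENNReal.ofReal_pos.2 hu
      rw [← hg0] at hpos
      obtain ⟨k, hk⟩ := iInf_lt_iff.1 hpos
      exact ⟨(k:ℝ), Nat.cast_nonneg k, hk.le⟩
    · rintro σ ⟨h0, h1⟩
      refine ⟨h0, le_trans ?_ h1⟩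
      calc ENNReal.ofReal t * distrib muI g σ ≤ 1 * distrib muI g σ :=
            mul_le_mul_of_nonneg_right htle1 zero_le
        _ = _ := one_mul _

end RearrDil

section Key

lemma key (E : SymmetricSpace) {t : ℝ} (ht : 0 < t) (ht1 : t ≤ 1) (y : ℝ → ℝ)
    (hy : E.Mem y) :
    ∃ g ys : ℝ → ℝ,
      E.Mem g ∧ E.Mem ys ∧ E.N g ≤ E.N y ∧ E.N ys ≤ E.N y ∧
      N2 E (tensor ((Ioc (0:ℝ) t).indicator fun _ => (1:ℝ)) g) = E.N (dil t g) ∧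
      E.N (dil t y) = E.N (dil t g) ∧
      N2 E (tensor ((Ioc (0:ℝ) t).indicator fun _ => (1:ℝ)) y) = E.N (dil t ys) := by
  set x : ℝ → ℝ := (Ioc (0:ℝ) t).indicator fun _ => (1:ℝ) with hx
  set g : ℝ → ℝ := fun u => y u * ((Hinf y)ᶜ).indicator (fun _ => (1:ℝ)) u with hg
  set p1 : ℝ → ℝ := fun u => y u * (Hinf y).indicator (fun _ => (1:ℝ)) u with hp1
  have htne : ENNReal.ofReal t ≠ 0 := by
    simp only [ne_eq, ENNReal.ofReal_eq_zero, not_le]; exact ht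
  have htle1 : ENNReal.ofReal t ≤ 1 := by
    rw [← ENNReal.ofReal_one]; exact ENNReal.ofReal_le_ofReal ht1
  have habs : ∀ (W : Set ℝ) (u : ℝ), |y u * W.indicator (fun _ => (1:ℝ)) u| ≤ |y u| := by
    intro W u
    by_cases h : u ∈ W <;> simp [h]
  have hMg : E.Mem g := E.mono_mem g y hy (Eventually.of_forall fun u => by
    rw [hg]; exact habs _ u)
  have hNg : E.N g ≤ E.N y := E.mono_norm g y hy (Eventually.of_forall fun u => by
    rw [hg]; exact habs _ u)
  have hMp1 : E.Mem p1 := E.mono_mem p1 y hy (Eventually.of_forall fun u => by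
    rw [hp1]; exact habs _ u)
  -- distribution identities
  have hng : ∀ τ : ℝ, 0 ≤ τ → distrib muI g τ = distrib muI y τ - muI (Hinf y) := by
    intro τ hτ; rw [hg]; exact distrib_g y τ hτ
  have hnp1 : ∀ τ : ℝ, 0 ≤ τ → distrib muI p1 τ = muI (Hinf y) := by
    intro τ hτ; rw [hp1]; exact distrib_p1 y τ hτ
  have hn_le1 : ∀ τ : ℝ, distrib muI y τ ≤ 1 := fun τ => distrib_muI_le_one y τ
  have hg_le1 : ∀ τ : ℝ, distrib muI g τ ≤ 1 := fun τ => distrib_muI_le_one g τ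
  have hLiInf : muI (Hinf y) = ⨅ k : ℕ, distrib muI y (k:ℝ) := muI_Hinf y
  have hg0 : (⨅ k : ℕ, distrib muI g (k:ℝ)) = 0 := by
    have h1 : ∀ k : ℕ, distrib muI g (k:ℝ)
        = distrib muI y (k:ℝ) - ⨅ j : ℕ, distrib muI y (j:ℝ) := by
      intro k; rw [hng k (Nat.cast_nonneg k), hLiInf]
    rw [iInf_congr h1]
    exact iInf_sub_iInf_eq_zero _ (fun k => hn_le1 _)
  -- ys := rearr muI y
  have hnys : ∀ τ : ℝ, 0 < τ →
      distrib muI (rearr muI y) τ = distrib muI y τ - muI (Hinf y) := by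
    intro τ hτ
    rw [distrib_rearr muI y hn_le1 τ hτ.le, hLiInf]
  have hMys : E.Mem (rearr muI y) :=
    E.symm_mem _ g hMg (fun τ hτ => by rw [hnys τ hτ, hng τ hτ.le])
  have hNys : E.N (rearr muI y) = E.N g :=
    E.symm_norm _ g hMg (fun τ hτ => by rw [hnys τ hτ, hng τ hτ.le])
  -- gs := rearr muI g
  have hngs : ∀ τ : ℝ, 0 < τ → distrib muI (rearr muI g) τ = distrib muI g τ := by
    intro τ hτ
    rw [distrib_rearr muI g hg_le1 τ hτ.le, hg0, tsub_zero]
  have hMgs : E.Mem (rearr muI g) := E.symm_mem _ g hMg hngs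
  -- Fg := rearr muI (dil t g)
  have hMFg : E.Mem (rearr muI (dil t g)) := by
    apply E.mono_mem _ _ hMgs
    apply Eventually.of_forall
    intro u
    rw [abs_of_nonneg (rearr_nonneg _ _ _), abs_of_nonneg (rearr_nonneg _ _ _)]
    exact rearr_dil_le ht ht1 g hg0 u
  have hdil : ∀ (w : ℝ → ℝ) (τ : ℝ), 0 ≤ τ →
      distrib muI (dil t w) τ = ENNReal.ofReal t * distrib muI w τ :=
    fun w τ hτ => distrib_dil ht ht1 w τ hτ
  have hdil_g0 : (⨅ k : ℕ, distrib muI (dil t g) (k:ℝ)) = 0 := by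
    refine le_antisymm (le_trans (iInf_mono fun k => ?_) hg0.le) zero_le
    rw [hdil g k (Nat.cast_nonneg k)]
    calc ENNReal.ofReal t * distrib muI g (k:ℝ) ≤ 1 * distrib muI g (k:ℝ) :=
          mul_le_mul_of_nonneg_right htle1 zero_le
      _ = _ := one_mul _
  have hnFg : ∀ τ : ℝ, 0 < τ →
      distrib muI (rearr muI (dil t g)) τ = ENNReal.ofReal t * distrib muI g τ := by
    intro τ hτ
    rw [distrib_rearr muI (dil t g) (fun σ => distrib_muI_le_one _ σ) τ hτ.le, hdil_g0,
      tsub_zero, hdil g τ hτ.le]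
  have hMdilg : E.Mem (dil t g) :=
    E.symm_mem _ _ hMFg (fun τ hτ => by rw [hdil g τ hτ.le, hnFg τ hτ])
  have hNdilgFg : E.N (dil t g) = E.N (rearr muI (dil t g)) :=
    E.symm_norm _ _ hMFg (fun τ hτ => by rw [hdil g τ hτ.le, hnFg τ hτ])
  -- tensor distribution
  have htens : ∀ (w : ℝ → ℝ) (τ : ℝ), 0 ≤ τ →
      distrib muI2 (tensor x w) τ = ENNReal.ofReal t * distrib muI w τ := by
    intro w τ hτ; rw [hx]; exact distrib_tensor ht ht1 w τ hτ
  have hiInf_t : ∀ m : ℕ → ℝ≥0∞,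
      (⨅ k : ℕ, ENNReal.ofReal t * m k) = ENNReal.ofReal t * ⨅ k : ℕ, m k :=
    fun m => (ENNReal.mul_iInf_of_ne htne ENNReal.ofReal_ne_top).symm
  have hnF : ∀ τ : ℝ, 0 < τ → distrib muI (rearr muI2 (tensor x y)) τ
      = ENNReal.ofReal t * (distrib muI y τ - muI (Hinf y)) := by
    intro τ hτ
    rw [distrib_rearr muI2 (tensor x y) (fun σ => distrib_muI2_le_one _ σ) τ hτ.le]
    have h1 : ∀ k : ℕ, distrib muI2 (tensor x y) (k:ℝ)
        = ENNReal.ofReal t * distrib muI y (k:ℝ) :=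
      fun k => htens y k (Nat.cast_nonneg k)
    rw [htens y τ hτ.le, iInf_congr h1, hiInf_t, ← hLiInf,
      ENNReal.mul_sub (fun _ _ => ENNReal.ofReal_ne_top)]
  have hdilg_dist : ∀ τ : ℝ, 0 < τ →
      distrib muI (dil t g) τ = ENNReal.ofReal t * (distrib muI y τ - muI (Hinf y)) := by
    intro τ hτ; rw [hdil g τ hτ.le, hng τ hτ.le]
  have hMF : E.Mem (rearr muI2 (tensor x y)) :=
    E.symm_mem _ (dil t g) hMdilg (fun τ hτ => by rw [hnF τ hτ, hdilg_dist τ hτ])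
  have hdilys_dist : ∀ τ : ℝ, 0 < τ →
      distrib muI (dil t (rearr muI y)) τ
        = ENNReal.ofReal t * (distrib muI y τ - muI (Hinf y)) := by
    intro τ hτ; rw [hdil (rearr muI y) τ hτ.le, hnys τ hτ]
  have hNdilys : E.N (dil t (rearr muI y)) = E.N (rearr muI2 (tensor x y)) :=
    E.symm_norm _ _ hMF (fun τ hτ => by rw [hdilys_dist τ hτ, hnF τ hτ])
  -- F₂ := rearr muI2 (tensor x g)
  have hnF2 : ∀ τ : ℝ, 0 < τ → distrib muI (rearr muI2 (tensor x g)) τ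
      = ENNReal.ofReal t * distrib muI g τ := by
    intro τ hτ
    rw [distrib_rearr muI2 (tensor x g) (fun σ => distrib_muI2_le_one _ σ) τ hτ.le]
    have h1 : ∀ k : ℕ, distrib muI2 (tensor x g) (k:ℝ)
        = ENNReal.ofReal t * distrib muI g (k:ℝ) :=
      fun k => htens g k (Nat.cast_nonneg k)
    rw [htens g τ hτ.le, iInf_congr h1, hiInf_t, hg0, mul_zero, tsub_zero]
  have hNF2 : E.N (rearr muI2 (tensor x g)) = E.N (dil t g) :=
    E.symm_norm _ _ hMdilg (fun τ hτ => by rw [hnF2 τ hτ, hdil g τ hτ.le])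
  -- the flat part
  obtain ⟨s, hsval⟩ := exists_slice ht ht1 y
  set Q : ℝ → ℝ := fun u => y u * (Hinf y ∩ Icc 0 s).indicator (fun _ => (1:ℝ)) u with hQ
  have hMQ : E.Mem Q := E.mono_mem Q y hy (Eventually.of_forall fun u => by
    rw [hQ]; exact habs _ u)
  have hnQ : ∀ τ : ℝ, 0 < τ → distrib muI Q τ = ENNReal.ofReal t * muI (Hinf y) := by
    intro τ hτ
    rw [hQ]
    rw [distrib_slice y (Icc 0 s) measurableSet_Icc τ hτ.le, hsval]
  have hNQ : E.N Q = 0 := flat_norm_zero E Q hMQ (ENNReal.ofReal t * muI (Hinf y)) hnQ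
  have hndilp1 : ∀ τ : ℝ, 0 < τ →
      distrib muI (dil t p1) τ = ENNReal.ofReal t * muI (Hinf y) := by
    intro τ hτ; rw [hdil p1 τ hτ.le, hnp1 τ hτ.le]
  have hMdilp1 : E.Mem (dil t p1) :=
    E.symm_mem _ Q hMQ (fun τ hτ => by rw [hndilp1 τ hτ, hnQ τ hτ])
  have hNdilp1 : E.N (dil t p1) = 0 := by
    rw [E.symm_norm (dil t p1) Q hMQ (fun τ hτ => by rw [hndilp1 τ hτ, hnQ τ hτ])]
    exact hNQ
  -- decomposition dil t y = dil t g + dil t p1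
  have hsplit : dil t y = dil t g + dil t p1 := by
    funext u
    show dil t y u = dil t g u + dil t p1 u
    rw [hg, hp1]
    simp only [dil]
    by_cases h : u / t ∈ Hinf y
    · simp [h]
    · simp [h]
  have hMdily : E.Mem (dil t y) := by
    rw [hsplit]; exact E.add_mem _ _ hMdilg hMdilp1
  have hle1 : E.N (dil t y) ≤ E.N (dil t g) := by
    calc E.N (dil t y) ≤ E.N (dil t g) + E.N (dil t p1) := by
          rw [hsplit]; exact E.N_add_le _ _ hMdilg hMdilp1
      _ = E.N (dil t g) := by rw [hNdilp1, add_zero]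
  have hle2 : E.N (dil t g) ≤ E.N (dil t y) := by
    have hsplit2 : dil t g = dil t y + (-1:ℝ) • (dil t p1) := by
      funext u
      have h' := congrFun hsplit u
      simp only [Pi.add_apply, Pi.smul_apply, smul_eq_mul] at h' ⊢
      linarith
    calc E.N (dil t g) ≤ E.N (dil t y) + E.N ((-1:ℝ) • dil t p1) := by
          rw [hsplit2]; exact E.N_add_le _ _ hMdily (E.smul_mem _ _ hMdilp1)
      _ = E.N (dil t y) := by
          rw [E.N_smul, hNdilp1]; simp
  refine ⟨g, rearr muI y, hMg, hMys, hNg, le_trans hNys.le hNg, ?_, le_antisymm hle1 hle2, ?_⟩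
  · show E.N (rearr muI2 (tensor x g)) = E.N (dil t g)
    exact hNF2
  · show E.N (rearr muI2 (tensor x y)) = E.N (dil t (rearr muI y))
    exact hNdilys.symm

end Key
theorem fundamental_function_multiplicator (E : SymmetricSpace) (t : ℝ)
    (ht : t ∈ Set.Ioc (0:ℝ) 1) :
    MN E ((Set.Ioc (0:ℝ) t).indicator fun _ => (1:ℝ)) = opN E t := by
  obtain ⟨ht0, ht1⟩ := ht
  rw [MN, opN]
  congr 1
  ext r
  simp only [mem_setOf_eq]
  constructor
  · rintro ⟨y, hy, hy1, rfl⟩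
    obtain ⟨g, ys, _, hMys, _, hNys, _, _, hlast⟩ := key E ht0 ht1 y hy
    exact ⟨ys, hMys, le_trans hNys hy1, hlast⟩
  · rintro ⟨y, hy, hy1, rfl⟩
    obtain ⟨g, ys, hMg, _, hNg, _, htens, hdily, _⟩ := key E ht0 ht1 y hy
    exact ⟨g, hMg, le_trans hNg hy1, by rw [hdily, ← htens]⟩
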